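/- Let r ≥ 1 and let p_i, q_i, k_i (for 1 ≤ i ≤ r), P and ℓ⁺ be positive integers. Set q₀ = 1, p₀ = P, ℓ⁻ = Σ_{i=1}^r q_i k_i, n_t = Σ_{i=t+1}^r q_i k_i for 0 ≤ t ≤ r−1 (so n₀ = ℓ⁻), and Δ_t = p_{t+1}q_t − p_t q_{t+1} for 0 ≤ t ≤ r−1. Define μ⁺ = (ℓ⁺ + ℓ⁻)(ℓ⁺ − 1) + Σ_{i=1}^r [p_i(Σ_{j=i}^r q_j k_j) + q_i(ℓ⁺ + Σ_{j=1}^{i−1} p_j k_j)]·k_i − (ℓ⁺ + Σ_{i=1}^r p_i k_i) + 1 and μ⁻ = (ℓ⁺ + ℓ⁻)(ℓ⁺ − 1) + (Pℓ⁻ + ℓ⁺)(ℓ⁻ − 1) + 1. Then, in ℚ: μ⁺ − μ⁻ = Σ_{t=0}^{r−1} [n_t(n_t − 1)/(q_t q_{t+1})]·Δ_t. -/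
import Mathlib


open Finset

/-- Lemma 7.4: `μ⁺ - μ⁻ = Σ_{t=0}^{r-1} n_t(n_t - 1)/(q_t q_{t+1}) · Δ_t`,
where `q₀ = 1`, `p₀ = P`, `n_t = Σ_{i=t+1}^r q_i k_i` and
`Δ_t = p_{t+1} q_t - p_t q_{t+1}`. -/
theorem lemma_7_4 (r : ℕ) (hr : 1 ≤ r)
    (p q k : ℕ → ℤ) (P lp : ℤ) (hP : 0 < P) (hlp : 0 < lp)
    (hp0 : p 0 = P) (hq0 : q 0 = 1)
    (hp : ∀ i, 1 ≤ i → i ≤ r → 0 < p i)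
    (hq : ∀ i, 1 ≤ i → i ≤ r → 0 < q i)
    (hk : ∀ i, 1 ≤ i → i ≤ r → 0 < k i)
    (mup mum : ℤ)
    (hmup : mup = (lp + ∑ i ∈ Finset.Icc 1 r, q i * k i) * (lp - 1)
        + ∑ i ∈ Finset.Icc 1 r,
            (p i * (∑ j ∈ Finset.Icc i r, q j * k j)
              + q i * (lp + ∑ j ∈ Finset.Ico 1 i, p j * k j)) * k i
        - (lp + ∑ i ∈ Finset.Icc 1 r, p i * k i) + 1)
    (hmum : mum = (lp + ∑ i ∈ Finset.Icc 1 r, q i * k i) * (lp - 1)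
        + (P * (∑ i ∈ Finset.Icc 1 r, q i * k i) + lp)
            * ((∑ i ∈ Finset.Icc 1 r, q i * k i) - 1) + 1) :
    ((mup - mum : ℤ) : ℚ) =
      ∑ t ∈ Finset.range r,
        (((∑ i ∈ Finset.Icc (t + 1) r, q i * k i)
            * ((∑ i ∈ Finset.Icc (t + 1) r, q i * k i) - 1) : ℤ) : ℚ)
          / ((q t * q (t + 1) : ℤ) : ℚ)
          * ((p (t + 1) * q t - p t * q (t + 1) : ℤ) : ℚ) := by
  -- notation
  set L : ℕ → ℤ := fun t => ∑ i ∈ Finset.Icc (t + 1) r, q i * k i with hL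
  -- basic facts
  have hqne : ∀ t, t ≤ r → (q t : ℚ) ≠ 0 := by
    intro t ht
    rcases Nat.eq_zero_or_pos t with h0 | h1
    · subst h0; rw [hq0]; norm_num
    · exact_mod_cast (hq t h1 ht).ne'
  have hLr : L r = 0 := by
    simp [hL, Finset.Icc_eq_empty_of_lt (Nat.lt_succ_self r)]
  have hLstep : ∀ t, t < r → L t = q (t + 1) * k (t + 1) + L (t + 1) := by
    intro t ht
    have h1 : t + 1 ≤ r := ht
    simp only [hL]
    rw [Finset.Icc_eq_cons_Ioc h1, Finset.sum_cons]
    congr 1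
    rw [← Finset.Icc_add_one_left_eq_Ioc]
  have hMi : ∀ i, 1 ≤ i → i ≤ r →
      (∑ j ∈ Finset.Icc i r, q j * k j) = q i * k i + L i := by
    intro i h1 h2
    rw [Finset.Icc_eq_cons_Ioc h2, Finset.sum_cons]
    congr 1
    simp only [hL]; rw [← Finset.Icc_add_one_left_eq_Ioc]
  -- the telescoping function
  set F : ℕ → ℚ := fun t => (p t : ℚ) * (L t : ℚ) * ((L t : ℚ) - 1) / (q t : ℚ) with hF
  -- termwise rewriting of the RHS
  have hterm : ∀ t ∈ Finset.range r,
      (((L t) * ((L t) - 1) : ℤ) : ℚ) / ((q t * q (t + 1) : ℤ) : ℚ)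
          * ((p (t + 1) * q t - p t * q (t + 1) : ℤ) : ℚ)
        = (F (t + 1) - F t)
          + ((p (t + 1) * k (t + 1) * (2 * L (t + 1) + q (t + 1) * k (t + 1) - 1) : ℤ) : ℚ) := by
    intro t ht
    rw [Finset.mem_range] at ht
    have hq1 : (q t : ℚ) ≠ 0 := hqne t (le_of_lt ht)
    have hq2 : (q (t + 1) : ℚ) ≠ 0 := hqne (t + 1) ht
    have hLt := hLstep t ht
    simp only [hF]
    rw [hLt]
    push_cast
    field_simp
    ring
  rw [Finset.sum_congr rfl hterm, Finset.sum_add_distrib, Finset.sum_range_sub F]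
  have hF0 : F 0 = (P : ℚ) * (L 0 : ℚ) * ((L 0 : ℚ) - 1) := by
    simp only [hF]; simp [hp0, hq0]
  have hFr : F r = 0 := by simp only [hF]; simp [hLr]
  rw [hFr, hF0]
  -- turn the remaining range-sum into an Icc-sum
  have hrange : ∑ t ∈ Finset.range r,
        ((p (t + 1) * k (t + 1) * (2 * L (t + 1) + q (t + 1) * k (t + 1) - 1) : ℤ) : ℚ)
      = ((∑ i ∈ Finset.Icc 1 r, p i * k i * (2 * L i + q i * k i - 1) : ℤ) : ℚ) := by
    push_cast
    rw [← Finset.Ico_add_one_right_eq_Icc, Finset.sum_Ico_eq_sum_range]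
    simp [add_comm 1]
  rw [hrange]
  -- now reduce to an integer identity
  have key : (mup - mum : ℤ)
      = -(P * L 0 * (L 0 - 1)) + ∑ i ∈ Finset.Icc 1 r, p i * k i * (2 * L i + q i * k i - 1) := by
    subst hmup hmum
    -- expand the μ⁺ sum
    have e1 : ∑ i ∈ Finset.Icc 1 r,
          (p i * (∑ j ∈ Finset.Icc i r, q j * k j)
            + q i * (lp + ∑ j ∈ Finset.Ico 1 i, p j * k j)) * k i
        = ∑ i ∈ Finset.Icc 1 r,
            (p i * k i * (q i * k i) + p i * k i * L i + lp * (q i * k i)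
              + q i * k i * (∑ j ∈ Finset.Ico 1 i, p j * k j)) := by
      refine Finset.sum_congr rfl fun i hi => ?_
      rw [Finset.mem_Icc] at hi
      rw [hMi i hi.1 hi.2]
      ring
    -- double sum swap
    have hswap : ∑ i ∈ Finset.Icc 1 r, q i * k i * (∑ j ∈ Finset.Ico 1 i, p j * k j)
        = ∑ i ∈ Finset.Icc 1 r, p i * k i * L i := by
      simp only [Finset.mul_sum]
      rw [Finset.sum_comm' (s' := fun j => Finset.Icc (j + 1) r) (t' := Finset.Icc 1 r)
        (by intro x y; simp only [Finset.mem_Icc, Finset.mem_Ico]; omega)]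
      refine Finset.sum_congr rfl fun j hj => ?_
      simp only [hL]; rw [Finset.mul_sum]
      refine Finset.sum_congr rfl fun x hx => ?_
      ring
    -- expand the remaining sums
    have e2 : ∑ i ∈ Finset.Icc 1 r, p i * k i * (2 * L i + q i * k i - 1)
        = 2 * (∑ i ∈ Finset.Icc 1 r, p i * k i * L i)
          + (∑ i ∈ Finset.Icc 1 r, p i * k i * (q i * k i))
          - (∑ i ∈ Finset.Icc 1 r, p i * k i) := by
      rw [Finset.mul_sum, ← Finset.sum_add_distrib, ← Finset.sum_sub_distrib]
      exact Finset.sum_congr rfl fun i _ => by ring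
    have e3 : ∑ i ∈ Finset.Icc 1 r,
          (p i * k i * (q i * k i) + p i * k i * L i + lp * (q i * k i)
            + q i * k i * (∑ j ∈ Finset.Ico 1 i, p j * k j))
        = (∑ i ∈ Finset.Icc 1 r, p i * k i * (q i * k i))
          + (∑ i ∈ Finset.Icc 1 r, p i * k i * L i)
          + lp * (∑ i ∈ Finset.Icc 1 r, q i * k i)
          + (∑ i ∈ Finset.Icc 1 r, p i * k i * L i) := by
      rw [Finset.sum_add_distrib, Finset.sum_add_distrib, Finset.sum_add_distrib, hswap,
        ← Finset.mul_sum]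
    rw [e1, e3, e2]
    have hL0 : L 0 = ∑ i ∈ Finset.Icc 1 r, q i * k i := by simp only [hL]
    rw [← hL0]
    ring
  rw [key]
  push_cast
  ring
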